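/- For every integer P ≥ 2, the number x̄ = (√(P+9) − √(P+1))/(2(P+1)^{1/6}) satisfies 0 < x̄ ≤ 3^{-1/3}, (3/2)x̄² + 1/x̄ = c_H^P, and x̄² = c_H^P − c_R^P, where c_H^P = (2P+8−√((P+1)(P+9)))/(2(P+1)^{1/3}) and c_R^P = (P+3)/(2(P+1)^{1/3}). In particular c_H^P > c_R^P. -/

import Mathlib

private lemma aux_eq1 (u t : ℝ) (hu : 0 < u) (htu : u ^ 3 < t)
    (ht2 : t ^ 2 = u ^ 6 + 8) :
    3/2 * ((t - u^3)/(2*u))^2 + 1/((t - u^3)/(2*u)) =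
      (2*u^6 + 6 - u^3*t) / (2 * u^2) := by
  have h1 : t - u ^ 3 ≠ 0 := by linarith
  have h2 : u ≠ 0 := ne_of_gt hu
  field_simp
  ring_nf
  linear_combination (3*t - 5*u^3 : ℝ) * ht2

private lemma aux_eq2 (u t : ℝ) (hu : 0 < u) (ht2 : t ^ 2 = u ^ 6 + 8) :
    ((t - u^3)/(2*u))^2 =
      (2*u^6 + 6 - u^3*t) / (2 * u^2) - (u^6 + 2) / (2 * u^2) := by
  have h2 : u ≠ 0 := ne_of_gt hu
  field_simp
  ring_nf
  linear_combination (1 : ℝ) * ht2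

private lemma aux_lt (u t : ℝ) (hu : 0 < u) (ht : 0 < t)
    (ht2 : t ^ 2 = u ^ 6 + 8) :
    (u^6 + 2) / (2 * u^2) < (2*u^6 + 6 - u^3*t) / (2 * u^2) := by
  have hnum : u ^ 3 * t < u ^ 6 + 4 := by
    nlinarith [mul_pos (pow_pos hu 3) ht, pow_pos hu 6, sq_nonneg (u^3*t - u^6 - 4)]
  exact (div_lt_div_iff_of_pos_right (by positivity)).mpr (by linarith)

set_option maxHeartbeats 1000000 in
/-- The Claim in the proof of Theorem 5.5: for every integer `P ≥ 2`, the
number `x̄ = (√(P+9) − √(P+1))/(2(P+1)^{1/6})` satisfies `0 < x̄ ≤ 3^{-1/3}`,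
`(3/2)x̄² + 1/x̄ = c_H^P`, and `x̄² = c_H^P − c_R^P`, where
`c_H^P = (2P+8−√((P+1)(P+9)))/(2(P+1)^{1/3})` and
`c_R^P = (P+3)/(2(P+1)^{1/3})`. In particular `c_R^P < c_H^P`. -/
theorem hill_region_width_claim (P : ℕ) (hP : 2 ≤ P) :
    let cHP : ℝ := (2*(P:ℝ)+8 - Real.sqrt (((P:ℝ)+1) * ((P:ℝ)+9))) /
      (2 * ((P:ℝ)+1) ^ ((1:ℝ)/3))
    let cRP : ℝ := ((P:ℝ)+3) / (2 * ((P:ℝ)+1) ^ ((1:ℝ)/3))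
    let xbar : ℝ := (Real.sqrt ((P:ℝ)+9) - Real.sqrt ((P:ℝ)+1)) /
      (2 * ((P:ℝ)+1) ^ ((1:ℝ)/6))
    (0 < xbar ∧ xbar ≤ (3:ℝ) ^ (-(1:ℝ)/3)) ∧
    (3/2) * xbar^2 + 1/xbar = cHP ∧
    xbar^2 = cHP - cRP ∧
    cRP < cHP := by
  intro cHP cRP xbar
  set a : ℝ := (P:ℝ) + 1 with ha_def
  have ha3 : (3:ℝ) ≤ a := by
    have : (2:ℝ) ≤ (P:ℝ) := by exact_mod_cast hP
    simp [ha_def]; linarith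
  have ha0 : (0:ℝ) < a := by linarith
  set u : ℝ := a ^ ((1:ℝ)/6) with hu_def
  have hu0 : 0 < u := Real.rpow_pos_of_pos ha0 _
  have hu6 : u ^ 6 = a := by
    rw [hu_def, ← Real.rpow_natCast (a ^ ((1:ℝ)/6)) 6, ← Real.rpow_mul ha0.le]
    norm_num
  have hu2 : a ^ ((1:ℝ)/3) = u ^ 2 := by
    rw [hu_def, ← Real.rpow_natCast (a ^ ((1:ℝ)/6)) 2, ← Real.rpow_mul ha0.le]
    norm_num
  have hs : Real.sqrt a = u ^ 3 := by
    rw [Real.sqrt_eq_rpow, hu_def, ← Real.rpow_natCast (a ^ ((1:ℝ)/6)) 3,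
      ← Real.rpow_mul ha0.le]
    norm_num
  set t : ℝ := Real.sqrt ((P:ℝ) + 9) with ht_def
  have h9 : (P:ℝ) + 9 = a + 8 := by simp [ha_def]; ring
  have ht0 : 0 < t := by
    rw [ht_def]; exact Real.sqrt_pos.mpr (by linarith)
  have ht2 : t ^ 2 = u ^ 6 + 8 := by
    rw [ht_def, Real.sq_sqrt (by linarith : (0:ℝ) ≤ (P:ℝ) + 9), h9, hu6]
  have hst : Real.sqrt (a * ((P:ℝ) + 9)) = u ^ 3 * t := by
    rw [Real.sqrt_mul ha0.le, hs, ht_def]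
  -- t > u^3
  have htu : u ^ 3 < t := by
    nlinarith [pow_pos hu0 3, ht2]
  -- xbar in terms of u, t
  have hxbar : xbar = (t - u ^ 3) / (2 * u) := by
    simp only [xbar, ha_def, hs, ht_def]
    rw [← ha_def, hs, ← hu_def]
  have hx0 : 0 < xbar := by
    rw [hxbar]
    apply div_pos (by linarith) (by linarith)
  -- c = 3^{1/3}
  set c : ℝ := (3:ℝ) ^ ((1:ℝ)/3) with hc_def
  have hc0 : 0 < c := Real.rpow_pos_of_pos (by norm_num) _
  have hc3 : c ^ 3 = 3 := by
    rw [hc_def, ← Real.rpow_natCast ((3:ℝ) ^ ((1:ℝ)/3)) 3,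
      ← Real.rpow_mul (by norm_num : (0:ℝ) ≤ 3)]
    norm_num
  have hcle : c ≤ 3/2 := by nlinarith [hc3, hc0, mul_pos hc0 hc0]
  have hu2c : c ≤ u ^ 2 := by
    nlinarith [pow_pos hu0 4, mul_pos hc0 hc0, mul_pos hc0 (pow_pos hu0 2), hc3, hu6, ha3]
  have hneg : (3:ℝ) ^ (-(1:ℝ)/3) = 1 / c := by
    rw [hc_def, show (-(1:ℝ)/3) = -((1:ℝ)/3) by ring,
      Real.rpow_neg (by norm_num : (0:ℝ) ≤ 3)]
    exact (one_div _).symm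
  -- key inequality: 4*c ≤ u*t + u^4
  have hkey : 4 * c ≤ u * t + u ^ 4 := by
    have hc2 : c ^ 2 ≤ u ^ 4 := by nlinarith [hu2c, hc0]
    have h3c : (3:ℝ) ≤ c * c ^ 2 := by nlinarith [hc3]
    have hcu4 : (3:ℝ) ≤ c * u ^ 4 :=
      h3c.trans (mul_le_mul_of_nonneg_left hc2 hc0.le)
    have ht2' : (u * t) ^ 2 = u ^ 8 + 8 * u ^ 2 := by
      rw [mul_pow, ht2]; ring
    have h2c : 2 * c ^ 2 ≤ c + 3 := by nlinarith [hcle, hc0]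
    have h1 : (4 * c - u ^ 4) ^ 2 ≤ (u * t) ^ 2 := by
      rw [ht2']
      nlinarith [h2c, hcu4, hu2c]
    rcases le_or_gt (4 * c - u ^ 4) 0 with h | h
    · nlinarith [mul_pos hu0 ht0]
    · nlinarith [mul_pos hu0 ht0, h1]
  refine ⟨⟨hx0, ?_⟩, ?_, ?_, ?_⟩
  · rw [hxbar, hneg, div_le_div_iff₀ (by positivity) hc0]
    nlinarith [ht2, mul_pos hu0 ht0]
  · rw [hxbar]
    have hne : t - u ^ 3 ≠ 0 := by linarith
    show 3/2 * ((t - u^3)/(2*u))^2 + 1/((t - u^3)/(2*u)) =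
      (2*(P:ℝ) + 8 - Real.sqrt (a * ((P:ℝ)+9))) / (2 * a ^ ((1:ℝ)/3))
    rw [hst, hu2]
    have hP8 : 2*(P:ℝ) + 8 = 2*u^6 + 6 := by rw [hu6]; simp [ha_def]; ring
    rw [hP8]
    exact aux_eq1 u t hu0 htu ht2
  · rw [hxbar]
    show ((t - u^3)/(2*u))^2 =
      (2*(P:ℝ) + 8 - Real.sqrt (a * ((P:ℝ)+9))) / (2 * a ^ ((1:ℝ)/3)) -
      ((P:ℝ) + 3) / (2 * a ^ ((1:ℝ)/3))
    rw [hst, hu2]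
    have hP8 : 2*(P:ℝ) + 8 = 2*u^6 + 6 := by rw [hu6]; simp [ha_def]; ring
    have hP3 : (P:ℝ) + 3 = u^6 + 2 := by rw [hu6]; simp [ha_def]; ring
    rw [hP8, hP3]
    exact aux_eq2 u t hu0 ht2
  · show ((P:ℝ) + 3) / (2 * a ^ ((1:ℝ)/3)) <
      (2*(P:ℝ) + 8 - Real.sqrt (a * ((P:ℝ)+9))) / (2 * a ^ ((1:ℝ)/3))
    rw [hst, hu2]
    have hP8 : 2*(P:ℝ) + 8 = 2*u^6 + 6 := by rw [hu6]; simp [ha_def]; ring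
    have hP3 : (P:ℝ) + 3 = u^6 + 2 := by rw [hu6]; simp [ha_def]; ring
    rw [hP8, hP3]
    exact aux_lt u t hu0 ht0 ht2
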